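/- Bosonic birthday paradox with a uniformly random collision-free input: let M, N be natural numbers with N ≥ 1 and M ≥ 2N². Let Ω be the finite set of configurations s : Fin M → ℕ with ∑_i s(i) = N, and let G ⊆ Ω be the set of collision-free configurations (those with s(i) ≤ 1 for all i). Then for every unitary matrix V indexed by Ω×Ω over ℂ, (1/|G|)·∑_{x∈G} ∑_{y∈Ω∖G} |V_{y,x}|² < 2N²/M. -/

import Mathlib

open Finset

/-- Each row of a unitary matrix has unit ℓ² norm. -/
lemma bbp_row (Ω : Type*) [Fintype Ω] [DecidableEq Ω] (V : Matrix.unitaryGroup Ω ℂ) (y : Ω) :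
    ∑ x, ‖(V : Matrix Ω Ω ℂ) y x‖ ^ 2 = 1 := by
  have h := V.prop
  rw [Matrix.mem_unitaryGroup_iff] at h
  have h2 := congrFun (congrFun h y) y
  rw [Matrix.mul_apply, Matrix.one_apply_eq] at h2
  have h3 : ∑ x, (‖(V : Matrix Ω Ω ℂ) y x‖ ^ 2 : ℂ) = 1 := by
    rw [← h2]
    apply Finset.sum_congr rfl
    intro x _
    rw [Matrix.star_apply, RCLike.star_def, Complex.mul_conj]
    norm_cast
    rw [Complex.sq_norm]
  have h4 : ((∑ x, ‖(V : Matrix Ω Ω ℂ) y x‖ ^ 2 : ℝ) : ℂ) = ((1 : ℝ) : ℂ) := by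
    push_cast
    rw [h3]
  exact_mod_cast h4

/-- Abstract form of the collision-probability bound. -/
lemma bbp_main {Ω : Type*} [Fintype Ω] [DecidableEq Ω] (V : Matrix.unitaryGroup Ω ℂ)
    (G : Finset Ω) (a b : ℝ) (hGpos : 0 < G.card) (hb : 0 < b) (_ha : 0 ≤ a)
    (hkey : b * (Fintype.card Ω : ℝ) < (b + a) * (G.card : ℝ)) :
    1 / (G.card : ℝ) * ∑ x ∈ G, ∑ y ∈ Gᶜ, ‖(V : Matrix Ω Ω ℂ) y x‖ ^ 2
      < a / b := by
  have hGle : G.card ≤ Fintype.card Ω := Finset.card_le_univ G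
  have hgR : (0 : ℝ) < (G.card : ℝ) := by exact_mod_cast hGpos
  have hsum : ∑ x ∈ G, ∑ y ∈ Gᶜ, ‖(V : Matrix Ω Ω ℂ) y x‖ ^ 2
      ≤ (Fintype.card Ω : ℝ) - (G.card : ℝ) := by
    rw [Finset.sum_comm]
    have step1 : ∀ y ∈ Gᶜ, ∑ x ∈ G, ‖(V : Matrix Ω Ω ℂ) y x‖ ^ 2 ≤ 1 := by
      intro y _
      calc ∑ x ∈ G, ‖(V : Matrix Ω Ω ℂ) y x‖ ^ 2
          ≤ ∑ x, ‖(V : Matrix Ω Ω ℂ) y x‖ ^ 2 :=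
            Finset.sum_le_sum_of_subset_of_nonneg (Finset.subset_univ G)
              (fun x _ _ => by positivity)
        _ = 1 := bbp_row Ω V y
    calc ∑ y ∈ Gᶜ, ∑ x ∈ G, ‖(V : Matrix Ω Ω ℂ) y x‖ ^ 2
        ≤ ∑ _y ∈ Gᶜ, (1 : ℝ) := Finset.sum_le_sum step1
      _ = (Gᶜ.card : ℝ) := by simp
      _ = (Fintype.card Ω : ℝ) - (G.card : ℝ) := by
          rw [Finset.card_compl, Nat.cast_sub hGle]
  have hfinal : ((Fintype.card Ω : ℝ) - (G.card : ℝ)) / (G.card : ℝ) < a / b := by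
    rw [div_lt_div_iff₀ hgR hb]
    nlinarith
  calc 1 / (G.card : ℝ) * ∑ x ∈ G, ∑ y ∈ Gᶜ, ‖(V : Matrix Ω Ω ℂ) y x‖ ^ 2
      ≤ 1 / (G.card : ℝ) * ((Fintype.card Ω : ℝ) - (G.card : ℝ)) := by
        apply mul_le_mul_of_nonneg_left hsum
        positivity
    _ = ((Fintype.card Ω : ℝ) - (G.card : ℝ)) / (G.card : ℝ) := by ring
    _ < a / b := hfinal

/-- Stars and bars: the number of configurations of `N` photons in `M` modes. -/
lemma bbp_card_config (M N : ℕ) [Fintype {s : Fin M → ℕ // ∑ i, s i = N}] :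
    Fintype.card {s : Fin M → ℕ // ∑ i, s i = N} = (M + N - 1).choose N := by
  rw [Fintype.card_congr (Sym.equivNatSumOfFintype (Fin M) N).symm,
    Sym.card_sym_eq_choose, Fintype.card_fin]

/-- The number of collision-free configurations is `M.choose N`. -/
lemma bbp_card_good (M N : ℕ) [Fintype {s : Fin M → ℕ // ∑ i, s i = N}] :
    (Finset.univ.filter
        (fun x : {s : Fin M → ℕ // ∑ i, s i = N} => ∀ i, x.1 i ≤ 1)).card = M.choose N := by
  have hpc : (Finset.powersetCard N (Finset.univ : Finset (Fin M))).card = M.choose N := by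
    simp [Finset.card_powersetCard]
  rw [← hpc]
  apply Finset.card_bij (fun s _ => Finset.univ.filter (fun i => s.1 i = 1))
  · intro s h
    simp only [mem_filter, mem_univ, true_and] at h
    rw [Finset.mem_powersetCard]
    refine ⟨Finset.subset_univ _, ?_⟩
    rw [Finset.card_filter]
    have : (∑ i, if s.1 i = 1 then 1 else 0) = ∑ i, s.1 i := by
      apply Finset.sum_congr rfl
      intro i _
      have := h i
      split <;> omega
    rw [this, s.2]
  · intro s h t h' heq
    simp only [mem_filter, mem_univ, true_and] at h h'
    apply Subtype.ext; funext i
    have := Finset.ext_iff.mp heq i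
    simp only [mem_filter, mem_univ, true_and] at this
    have h1 := h i; have h2 := h' i
    omega
  · intro T hT
    rw [Finset.mem_powersetCard] at hT
    refine ⟨⟨fun i => if i ∈ T then 1 else 0, ?_⟩, ?_, ?_⟩
    · rw [Finset.sum_ite_mem, Finset.univ_inter, Finset.sum_const, hT.2, smul_eq_mul, mul_one]
    · simp only [mem_filter, mem_univ, true_and]
      intro i
      split <;> simp
    · ext i
      simp

lemma bbp_asc (m : ℕ) : ∀ n : ℕ, (m.ascFactorial n : ℝ) = ∏ k ∈ Finset.range n, ((m : ℝ) + k)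
  | 0 => by simp
  | n + 1 => by
    rw [Nat.ascFactorial_succ, Finset.prod_range_succ]
    push_cast
    rw [bbp_asc m n]
    ring

lemma bbp_desc (m : ℕ) (n : ℕ) (h : n ≤ m) :
    (m.descFactorial n : ℝ) = ∏ k ∈ Finset.range n, ((m : ℝ) - k) := by
  rw [Nat.descFactorial_eq_prod_range]
  push_cast [Nat.cast_prod]
  apply Finset.prod_congr rfl
  intro k hk
  rw [Finset.mem_range] at hk
  rw [Nat.cast_sub (le_of_lt (lt_of_lt_of_le hk h))]

/-- Key product inequality, by induction. -/
lemma bbp_prod (n : ℕ) (m : ℝ) (h : ((n : ℝ)) ^ 2 ≤ m) :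
    (∏ k ∈ Finset.range n, (m + k)) * (m - n * ((n : ℝ) - 1)) ≤
      m * ∏ k ∈ Finset.range n, (m - k) := by
  induction n generalizing m with
  | zero => simp
  | succ n ih =>
    have hc : (0 : ℝ) ≤ n := Nat.cast_nonneg n
    have hn2 : ((n : ℝ)) ^ 2 ≤ m := by push_cast at h; nlinarith
    have hm0 : (0 : ℝ) ≤ m := le_trans (sq_nonneg _) hn2
    have hmn : (0 : ℝ) ≤ m - n := by push_cast at h; nlinarith
    have hA : (0 : ℝ) ≤ ∏ k ∈ Finset.range n, (m + k) :=
      Finset.prod_nonneg fun k _ => by positivity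
    have ihm := ih m hn2
    have key : (m + n) * (m - ((n : ℝ) ^ 2 + n)) ≤ (m - n) * (m - ((n : ℝ) ^ 2 - n)) := by
      nlinarith [pow_nonneg hc 3]
    rw [Finset.prod_range_succ, Finset.prod_range_succ]
    push_cast
    calc (∏ k ∈ Finset.range n, (m + k)) * (m + n) * (m - (↑n + 1) * (↑n + 1 - 1))
        = (∏ k ∈ Finset.range n, (m + k)) * ((m + n) * (m - ((n : ℝ) ^ 2 + n))) := by ring
      _ ≤ (∏ k ∈ Finset.range n, (m + k)) * ((m - n) * (m - ((n : ℝ) ^ 2 - n))) :=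
          mul_le_mul_of_nonneg_left key hA
      _ = (m - n) * ((∏ k ∈ Finset.range n, (m + k)) * (m - n * ((n : ℝ) - 1))) := by ring
      _ ≤ (m - n) * (m * ∏ k ∈ Finset.range n, (m - k)) :=
          mul_le_mul_of_nonneg_left ihm hmn
      _ = m * ((∏ k ∈ Finset.range n, (m - k)) * (m - n)) := by ring

/-- The key numeric inequality between binomial coefficients. -/
lemma bbp_key (M N : ℕ) (hN : 1 ≤ N) (hM : 2 * N ^ 2 ≤ M) :
    (M : ℝ) * ((M + N - 1).choose N : ℝ) < ((M : ℝ) + 2 * N ^ 2) * (M.choose N : ℝ) := by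
  have hNM : N ≤ M := le_trans (by nlinarith) hM
  have hMR : ((N : ℝ)) ^ 2 ≤ (M : ℝ) := by
    have : (N : ℝ) ^ 2 ≤ 2 * (N : ℝ) ^ 2 := by nlinarith [sq_nonneg (N : ℝ)]
    calc ((N : ℝ)) ^ 2 ≤ 2 * (N : ℝ) ^ 2 := this
      _ ≤ (M : ℝ) := by exact_mod_cast hM
  have hN1 : (1 : ℝ) ≤ (N : ℝ) := by exact_mod_cast hN
  set A := ∏ k ∈ Finset.range N, ((M : ℝ) + k) with hA
  set D := ∏ k ∈ Finset.range N, ((M : ℝ) - k) with hD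
  have hDpos : 0 < D := by
    apply Finset.prod_pos
    intro k hk
    rw [Finset.mem_range] at hk
    have : (k : ℝ) < (N : ℝ) := by exact_mod_cast hk
    nlinarith
  have hApos : 0 ≤ A := by
    apply Finset.prod_nonneg
    intro k _
    positivity
  set c := (M : ℝ) - N * ((N : ℝ) - 1) with hc
  have hcpos : 0 < c := by rw [hc]; nlinarith
  have hmain : A * c ≤ (M : ℝ) * D := bbp_prod N M hMR
  have hMsq : (M : ℝ) * (M : ℝ) < ((M : ℝ) + 2 * N ^ 2) * c := by
    rw [hc]
    have hMR2 : 2 * (N : ℝ) ^ 2 ≤ (M : ℝ) := by exact_mod_cast hM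
    nlinarith [pow_pos (lt_of_lt_of_le zero_lt_one hN1) 3]
  have hMA : (M : ℝ) * A < ((M : ℝ) + 2 * N ^ 2) * D := by
    have h1 : (M : ℝ) * A * c ≤ (M : ℝ) * ((M : ℝ) * D) := by
      have := mul_le_mul_of_nonneg_left hmain (Nat.cast_nonneg M : (0:ℝ) ≤ M)
      calc (M : ℝ) * A * c = (M : ℝ) * (A * c) := by ring
        _ ≤ (M : ℝ) * ((M : ℝ) * D) := this
    have h2 : (M : ℝ) * ((M : ℝ) * D) < ((M : ℝ) + 2 * N ^ 2) * D * c := by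
      calc (M : ℝ) * ((M : ℝ) * D) = ((M : ℝ) * (M : ℝ)) * D := by ring
        _ < (((M : ℝ) + 2 * N ^ 2) * c) * D := mul_lt_mul_of_pos_right hMsq hDpos
        _ = ((M : ℝ) + 2 * N ^ 2) * D * c := by ring
    have h3 : (M : ℝ) * A * c < ((M : ℝ) + 2 * N ^ 2) * D * c := lt_of_le_of_lt h1 h2
    exact lt_of_mul_lt_mul_right (by linarith) (le_of_lt hcpos)
  have hfac : (0 : ℝ) < (Nat.factorial N : ℝ) := by exact_mod_cast N.factorial_pos
  have hAsc : ((M + N - 1).choose N : ℝ) * (Nat.factorial N : ℝ) = A := by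
    rw [hA, ← bbp_asc]
    rw [show (M.ascFactorial N : ℝ) = ((Nat.factorial N * (M + N - 1).choose N : ℕ) : ℝ) by
      rw [← Nat.ascFactorial_eq_factorial_mul_choose']]
    push_cast
    ring
  have hDesc : (M.choose N : ℝ) * (Nat.factorial N : ℝ) = D := by
    rw [hD, ← bbp_desc M N hNM]
    rw [show (M.descFactorial N : ℝ) = ((Nat.factorial N * M.choose N : ℕ) : ℝ) by
      rw [← Nat.descFactorial_eq_factorial_mul_choose]]
    push_cast
    ring
  rw [← mul_lt_mul_iff_of_pos_right hfac]
  calc (M : ℝ) * ((M + N - 1).choose N : ℝ) * (Nat.factorial N : ℝ)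
      = (M : ℝ) * (((M + N - 1).choose N : ℝ) * (Nat.factorial N : ℝ)) := by ring
    _ = (M : ℝ) * A := by rw [hAsc]
    _ < ((M : ℝ) + 2 * N ^ 2) * D := hMA
    _ = ((M : ℝ) + 2 * N ^ 2) * ((M.choose N : ℝ) * (Nat.factorial N : ℝ)) := by rw [hDesc]
    _ = ((M : ℝ) + 2 * N ^ 2) * (M.choose N : ℝ) * (Nat.factorial N : ℝ) := by ring

/-- **Bosonic birthday paradox with a uniformly random collision-free input.**
Let `Ω` be the set of configurations `s : Fin M → ℕ` of `N` photons in `M` modes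
(`∑ i, s i = N`), and let `G ⊆ Ω` be the collision-free configurations (`s i ≤ 1` for all
`i`).  For `N ≥ 1`, `M ≥ 2N²`, and any unitary `V` indexed by `Ω`, the probability of
observing a collision outcome when the input is uniform over `G` and `V` is applied is
less than `2N²/M`. -/
theorem bosonic_birthday_paradox (M N : ℕ) (hN : 1 ≤ N) (hM : 2 * N ^ 2 ≤ M)
    [Fintype {s : Fin M → ℕ // ∑ i, s i = N}]
    (V : Matrix.unitaryGroup {s : Fin M → ℕ // ∑ i, s i = N} ℂ) :
    (1 / ((Finset.univ.filter
        (fun x : {s : Fin M → ℕ // ∑ i, s i = N} => ∀ i, x.1 i ≤ 1)).card : ℝ)) *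
      ∑ x ∈ Finset.univ.filter
          (fun x : {s : Fin M → ℕ // ∑ i, s i = N} => ∀ i, x.1 i ≤ 1),
        ∑ y ∈ (Finset.univ.filter
            (fun x : {s : Fin M → ℕ // ∑ i, s i = N} => ∀ i, x.1 i ≤ 1))ᶜ,
          ‖(V : Matrix _ _ ℂ) y x‖ ^ 2
      < 2 * (N : ℝ) ^ 2 / (M : ℝ) := by
  have hNM : N ≤ M := le_trans (by nlinarith) hM
  have hMpos : 0 < M := lt_of_lt_of_le (by positivity) hM
  apply bbp_main V _ (2 * (N : ℝ) ^ 2) (M : ℝ)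
  · rw [bbp_card_good M N]
    exact Nat.choose_pos hNM
  · exact_mod_cast hMpos
  · positivity
  · rw [bbp_card_good M N, bbp_card_config M N]
    exact bbp_key M N hN hM
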